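/- Let E be a real inner product space (e.g. EuclideanSpace ℝ (Fin n)), a, b ∈ E, and f : ℝ → E continuous on [0,1] with f 0 = a, f 1 = b, and eVariationOn f (Set.Icc 0 1) = ENNReal.ofReal (dist a b). Then f '' (Set.Icc 0 1) = segment ℝ a b. -/

import Mathlib

/-- In a real inner product space, the image of any geodesic from `a` to `b`
(a continuous path on `[0,1]` whose length equals `dist a b`) is exactly the
segment from `a` to `b`. -/
theorem geodesic_image_eq_segment
    {E : Type*} [NormedAddCommGroup E] [InnerProductSpace ℝ E]
    (a b : E) (f : ℝ → E) (hf : ContinuousOn f (Set.Icc 0 1))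
    (h0 : f 0 = a) (h1 : f 1 = b)
    (hlen : eVariationOn f (Set.Icc 0 1) = ENNReal.ofReal (dist a b)) :
    f '' Set.Icc 0 1 = segment ℝ a b := by
  have key : ∀ t ∈ Set.Icc (0:ℝ) 1, dist a (f t) + dist (f t) b = dist a b := by
    intro t ht
    have h01 : (0:ℝ) ∈ Set.Icc (0:ℝ) 1 := by norm_num
    have h11 : (1:ℝ) ∈ Set.Icc (0:ℝ) 1 := by norm_num
    have hsplit := eVariationOn.Icc_add_Icc f (s := Set.Icc (0:ℝ) 1) ht.1 ht.2 ht
    have e1 : Set.Icc (0:ℝ) 1 ∩ Set.Icc 0 t = Set.Icc 0 t := by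
      rw [Set.inter_eq_right]; exact Set.Icc_subset_Icc le_rfl ht.2
    have e2 : Set.Icc (0:ℝ) 1 ∩ Set.Icc t 1 = Set.Icc t 1 := by
      rw [Set.inter_eq_right]; exact Set.Icc_subset_Icc ht.1 le_rfl
    have e3 : Set.Icc (0:ℝ) 1 ∩ Set.Icc 0 1 = Set.Icc 0 1 := Set.inter_self _
    rw [e1, e2, e3, hlen] at hsplit
    have hle1 : edist (f 0) (f t) ≤ eVariationOn f (Set.Icc 0 t) :=
      eVariationOn.edist_le f ⟨le_rfl, ht.1⟩ ⟨ht.1, le_rfl⟩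
    have hle2 : edist (f t) (f 1) ≤ eVariationOn f (Set.Icc t 1) :=
      eVariationOn.edist_le f ⟨le_rfl, ht.2⟩ ⟨ht.2, le_rfl⟩
    have hsum : edist (f 0) (f t) + edist (f t) (f 1) ≤ ENNReal.ofReal (dist a b) := by
      rw [← hsplit]; exact add_le_add hle1 hle2
    rw [edist_dist, edist_dist, h0, h1, ← ENNReal.ofReal_add dist_nonneg dist_nonneg] at hsum
    have := (ENNReal.ofReal_le_ofReal_iff dist_nonneg).mp hsum
    linarith [dist_triangle a (f t) b]
  apply Set.Subset.antisymm
  · rintro _ ⟨t, ht, rfl⟩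
    exact mem_segment_iff_wbtw.mpr (dist_add_dist_eq_iff.mp (key t ht))
  · rcases eq_or_ne a b with rfl | hab
    · rw [segment_same]
      rintro x rfl
      exact ⟨0, by norm_num, h0⟩
    · -- use IVT on φ x = ⟪b - a, x - a⟫
      set φ : E → ℝ := fun x => inner ℝ (b - a) (x - a) with hφ
      have hφc : Continuous φ := by
        exact (continuous_const.inner (continuous_id.sub continuous_const))
      have hcomp : ContinuousOn (φ ∘ f) (Set.Icc 0 1) := hφc.comp_continuousOn hf
      rintro y hy
      rw [segment_eq_image'] at hy
      obtain ⟨s, hs, rfl⟩ := hy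
      have hφ0 : (φ ∘ f) 0 = 0 := by simp [hφ, h0]
      have hφ1 : (φ ∘ f) 1 = ‖b - a‖^2 := by
        simp [hφ, h1, real_inner_self_eq_norm_sq]
      have hival := intermediate_value_Icc (by norm_num : (0:ℝ) ≤ 1) hcomp
      rw [hφ0, hφ1] at hival
      have hmem : s * ‖b - a‖^2 ∈ Set.Icc (0:ℝ) (‖b - a‖^2) := by
        constructor
        · exact mul_nonneg hs.1 (sq_nonneg _)
        · nlinarith [sq_nonneg (‖b - a‖), hs.1, hs.2]
      obtain ⟨t, ht, hφt⟩ := hival hmem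
      refine ⟨t, ht, ?_⟩
      -- f t ∈ segment, so f t = a + u • (b - a) for some u; φ (f t) = u * ‖b-a‖²
      have hseg : f t ∈ segment ℝ a b := by
        exact mem_segment_iff_wbtw.mpr (dist_add_dist_eq_iff.mp (key t ht))
      rw [segment_eq_image'] at hseg
      obtain ⟨u, hu, hfu⟩ := hseg
      have : (φ ∘ f) t = u * ‖b - a‖^2 := by
        simp only [Function.comp_apply, hφ, ← hfu]
        simp [real_inner_smul_right, real_inner_self_eq_norm_sq]
      rw [this] at hφt
      have hba : ‖b - a‖^2 ≠ 0 := by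
        simpa [sub_eq_zero] using hab.symm
      have hus : u = s := mul_right_cancel₀ hba hφt
      rw [← hfu, hus]
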